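/- arXiv:1510.02383 — 2 statements merged into one kernel-verified Lean document; each statement's English description precedes it below -/
import Mathlib

section
/- Let σ : G ⇢ L be a regular support, with r = rk(L). Then for every character χ ∈ Ĝ and every j ∈ {0,…,r}, Σ_{g ∈ G : ω_σ(g) = j} χ(g) = Σ_{s=0}^{r} γ_σ(s) · μ_L(s,j) · μ_≤(s, r − ω_{σ*}(χ)) · μ_≥(j,s). Consequently the pair (ω_{σ*}, ω_σ) is compatible and its Krawtchouk coefficients are K(ω_{σ*}, ω_σ)(i,j) = Σ_{s=0}^{r} γ_σ(s) μ_L(s,j) μ_≤(s, r−i) μ_≥(j,s). -/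
open Finset
open scoped Classical Pointwise

/-- A finite graded lattice of rank `r` (with rank function `ρ`) that is *regular*:
the counting numbers `μ_≤`, `μ_≥` and the Möbius numbers `μ_L` depend only on ranks. -/
structure RegularLattice (L : Type*) [Lattice L] [BoundedOrder L] [Fintype L] where
  /-- the rank of the lattice -/
  r : ℕ
  /-- the rank function -/
  ρ : L → ℕ
  ρ_bot : ρ ⊥ = 0
  ρ_top : ρ ⊤ = r
  ρ_covby : ∀ S T : L, S ⋖ T → ρ T = ρ S + 1
  /-- the Möbius function of the lattice -/
  mu : L → L → ℤ
  mu_self : ∀ S : L, mu S S = 1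
  mu_sum : ∀ S T : L, S < T → mu S T = - ∑ U : L, (if S ≤ U ∧ U < T then mu S U else 0)
  /-- `μ_≤ s t` : the number of elements of rank `s` below an element of rank `t` -/
  muLE : ℕ → ℕ → ℕ
  card_le : ∀ (s : ℕ) (T : L), Nat.card {S : L // ρ S = s ∧ S ≤ T} = muLE s (ρ T)
  /-- `μ_≥ s t` : the number of elements of rank `s` above an element of rank `t` -/
  muGE : ℕ → ℕ → ℕ
  card_ge : ∀ (s : ℕ) (T : L), Nat.card {S : L // ρ S = s ∧ T ≤ S} = muGE s (ρ T)
  /-- `μ_L s t` : the common value of the Möbius function on pairs of ranks `s ≤ t`,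
  with the convention `μ_L s t = 0` for `s > t` -/
  muN : ℕ → ℕ → ℤ
  mu_eq : ∀ S T : L, S ≤ T → mu S T = muN (ρ S) (ρ T)
  muN_zero : ∀ s t : ℕ, t < s → muN s t = 0

/-- A regular support `σ : G ⇢ L` on a finite abelian group `G` with values in a
regular lattice `L`, together with its cardinality invariant `γ`. -/
structure RegularSupport (L : Type*) [Lattice L] [BoundedOrder L] [Fintype L]
    (G : Type*) [AddCommGroup G] [Fintype G] (RL : RegularLattice L) where
  /-- the support function -/
  σ : G → L
  supp_zero : ∀ g : G, σ g = ⊥ ↔ g = 0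
  supp_neg : ∀ g : G, σ (-g) = σ g
  supp_add : ∀ g₁ g₂ : G, σ (g₁ + g₂) ≤ σ g₁ ⊔ σ g₂
  supp_sup : ∀ S₁ S₂ : L,
    {g : G | σ g ≤ S₁ ⊔ S₂} = {g : G | σ g ≤ S₁} + {g : G | σ g ≤ S₂}
  /-- `γ s` : the common cardinality of `G_σ(S)` over elements `S` of rank `s` -/
  γ : ℕ → ℕ
  card_supp : ∀ S : L, Nat.card {g : G // σ g ≤ S} = γ (RL.ρ S)

/-- The dual support `σ* : Ĝ → L`, `σ*(χ) = ⋁ {S ∈ L : χ ∈ G_σ(S)*}`. -/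
noncomputable def RegularSupport.dualSupp {L : Type*} [Lattice L] [BoundedOrder L] [Fintype L]
    {G : Type*} [AddCommGroup G] [Fintype G] {RL : RegularLattice L}
    (RS : RegularSupport L G RL) (χ : AddChar G ℂˣ) : L :=
  (Finset.univ.filter (fun S : L => ∀ g : G, RS.σ g ≤ S → χ g = 1)).sup id


section Aux
variable {L : Type*} [Lattice L] [BoundedOrder L] [Fintype L]

private lemma rho_lt_aux (RL : RegularLattice L) :
    ∀ n : ℕ, ∀ S T : L, (univ.filter fun U => S < U ∧ U ≤ T).card ≤ n → S < T →
      RL.ρ S < RL.ρ T := by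
  intro n
  induction n with
  | zero =>
    intro S T hc hlt
    exfalso
    have hT : T ∈ univ.filter fun U => S < U ∧ U ≤ T := by simp [hlt]
    have := Finset.card_pos.2 ⟨T, hT⟩
    omega
  | succ n ih =>
    intro S T hc hlt
    obtain ⟨U, hU, hmin⟩ : ∃ U, U ∈ univ.filter (fun U => S < U ∧ U ≤ T) ∧
        ∀ y, y ∈ univ.filter (fun U => S < U ∧ U ≤ T) → ¬ y < U := (Finset.exists_minimal
      (s := univ.filter fun U => S < U ∧ U ≤ T) ⟨T, by simp [hlt]⟩).imp
        fun _ h => ⟨h.1, fun y hy hyl => (minimal_iff_forall_lt.1 h).2 hyl hy⟩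
    rw [Finset.mem_filter] at hU
    obtain ⟨-, hSU, hUT⟩ := hU
    have hcov : S ⋖ U := by
      refine ⟨hSU, fun V hSV hVU => ?_⟩
      exact hmin V (by simp [hSV, le_trans hVU.le hUT]) hVU
    have hρ : RL.ρ U = RL.ρ S + 1 := RL.ρ_covby S U hcov
    rcases eq_or_lt_of_le hUT with rfl | hUT'
    · omega
    · have hsub : (univ.filter fun V => U < V ∧ V ≤ T) ⊆
          (univ.filter fun V => S < V ∧ V ≤ T).erase U := by
        intro V hV
        rw [Finset.mem_filter] at hV
        refine Finset.mem_erase.2 ⟨(hV.2.1).ne', by simp [hSU.trans hV.2.1, hV.2.2]⟩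
      have hUmem : U ∈ univ.filter fun V => S < V ∧ V ≤ T := by simp [hSU, hUT]
      have hcard : ((univ.filter fun V => U < V ∧ V ≤ T)).card ≤ n := by
        have h1 := Finset.card_le_card hsub
        have h2 := Finset.card_erase_of_mem hUmem
        omega
      have := ih U T hcard hUT'
      omega

lemma rho_lt (RL : RegularLattice L) {S T : L} (h : S < T) : RL.ρ S < RL.ρ T :=
  rho_lt_aux RL _ S T le_rfl h

lemma rho_le_r (RL : RegularLattice L) (S : L) : RL.ρ S ≤ RL.r := by
  rcases eq_or_lt_of_le (le_top : S ≤ ⊤) with rfl | h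
  · rw [RL.ρ_top]
  · have := rho_lt RL h
    rw [RL.ρ_top] at this
    omega

lemma mu_row_int (RL : RegularLattice L) (S T : L) :
    (∑ U : L, if S ≤ U ∧ U ≤ T then RL.mu S U else 0) = if S = T then 1 else 0 := by
  by_cases hST : S ≤ T
  swap
  · rw [if_neg (by rintro rfl; exact hST le_rfl)]
    refine Finset.sum_eq_zero fun U _ => ?_
    rw [if_neg]
    rintro ⟨h1, h2⟩
    exact hST (h1.trans h2)
  rcases eq_or_lt_of_le hST with rfl | hlt
  · rw [if_pos rfl, Finset.sum_eq_single S]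
    · simp [RL.mu_self]
    · intro U _ hne
      rw [if_neg]
      rintro ⟨h1, h2⟩
      exact hne (le_antisymm h2 h1)
    · simp
  · rw [if_neg (ne_of_lt hlt)]
    have hrec := RL.mu_sum S T hlt
    have split : ∀ U : L, (if S ≤ U ∧ U ≤ T then RL.mu S U else 0)
        = (if S ≤ U ∧ U < T then RL.mu S U else 0) + (if U = T then RL.mu S U else 0) := by
      intro U
      by_cases hUT : U = T
      · subst hUT
        rw [if_pos ⟨hST, le_rfl⟩, if_neg (by simp), if_pos rfl, zero_add]
      · rw [if_neg hUT, add_zero]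
        by_cases h1 : S ≤ U ∧ U ≤ T
        · rw [if_pos h1, if_pos ⟨h1.1, lt_of_le_of_ne h1.2 hUT⟩]
        · rw [if_neg h1, if_neg]
          rintro ⟨a, b⟩
          exact h1 ⟨a, b.le⟩
    rw [Finset.sum_congr rfl fun U _ => split U, Finset.sum_add_distrib,
      Finset.sum_ite_eq' Finset.univ T (fun U => RL.mu S U), if_pos (Finset.mem_univ T)]
    omega

lemma mu_col_int (RL : RegularLattice L) (V S : L) :
    (∑ U : L, if V ≤ U ∧ U ≤ S then RL.mu U S else 0) = if V = S then 1 else 0 := by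
  classical
  set M : Matrix L L ℤ := fun A B => if A ≤ B then RL.mu A B else 0 with hM
  set Z : Matrix L L ℤ := fun A B => if A ≤ B then 1 else 0 with hZ
  have hMZ : M * Z = 1 := by
    ext A B
    rw [Matrix.mul_apply, Matrix.one_apply]
    rw [← mu_row_int RL A B]
    refine Finset.sum_congr rfl fun U _ => ?_
    simp only [hM, hZ]
    by_cases h1 : A ≤ U <;> by_cases h2 : U ≤ B <;> simp [h1, h2]
  have hZM : Z * M = 1 := mul_eq_one_comm.mp hMZ
  have h3 : (Z * M) V S = (1 : Matrix L L ℤ) V S := by rw [hZM]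
  rw [Matrix.mul_apply, Matrix.one_apply] at h3
  rw [← h3]
  refine Finset.sum_congr rfl fun U _ => ?_
  simp only [hM, hZ]
  by_cases h1 : V ≤ U <;> by_cases h2 : U ≤ S <;> simp [h1, h2]

end Aux

section Aux2
variable {L : Type*} [Lattice L] [BoundedOrder L] [Fintype L]
variable {G : Type*} [AddCommGroup G] [Fintype G] {RL : RegularLattice L}

lemma le_dualSupp_iff (RS : RegularSupport L G RL) (χ : AddChar G ℂˣ) (S : L) :
    S ≤ RS.dualSupp χ ↔ ∀ g : G, RS.σ g ≤ S → χ g = 1 := by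
  constructor
  · intro hle g hg
    have key : ∀ g : G, RS.σ g ≤ RS.dualSupp χ → χ g = 1 := by
      unfold RegularSupport.dualSupp
      refine Finset.sup_induction (p := fun X => ∀ g : G, RS.σ g ≤ X → χ g = 1) ?_ ?_ ?_
      · intro g hg
        rw [le_bot_iff, RS.supp_zero] at hg
        subst hg
        exact AddChar.map_zero_eq_one χ
      · intro S₁ h₁ S₂ h₂ g hg
        have hmem : g ∈ {g : G | RS.σ g ≤ S₁} + {g : G | RS.σ g ≤ S₂} := by
          rw [← RS.supp_sup S₁ S₂]
          exact hg
        rw [Set.mem_add] at hmem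
        obtain ⟨a, ha, b, hb, rfl⟩ := hmem
        rw [AddChar.map_add_eq_mul, h₁ a ha, h₂ b hb, mul_one]
      · intro S hS
        rw [Finset.mem_filter] at hS
        exact hS.2
    exact key g (hg.trans hle)
  · intro h
    exact Finset.le_sup (f := id) (Finset.mem_filter.2 ⟨Finset.mem_univ S, h⟩)

lemma char_sum (RS : RegularSupport L G RL) (χ : AddChar G ℂˣ) (S : L) :
    (∑ g : G, if RS.σ g ≤ S then ((χ g : ℂˣ) : ℂ) else 0)
      = if S ≤ RS.dualSupp χ then (RS.γ (RL.ρ S) : ℂ) else 0 := by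
  by_cases h : S ≤ RS.dualSupp χ
  · rw [if_pos h]
    have htriv := (le_dualSupp_iff RS χ S).1 h
    have hcongr : ∀ g : G, (if RS.σ g ≤ S then ((χ g : ℂˣ) : ℂ) else 0)
        = if RS.σ g ≤ S then (1 : ℂ) else 0 := by
      intro g
      by_cases hg : RS.σ g ≤ S
      · rw [if_pos hg, if_pos hg, htriv g hg, Units.val_one]
      · rw [if_neg hg, if_neg hg]
    rw [Finset.sum_congr rfl fun g _ => hcongr g, ← Finset.sum_filter,
      Finset.sum_const, nsmul_eq_mul, mul_one]
    congr 1
    rw [← RS.card_supp S, Nat.card_eq_fintype_card, Fintype.card_subtype]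
  · rw [if_neg h]
    rw [le_dualSupp_iff] at h
    push_neg at h
    obtain ⟨h₀, hh, hne⟩ := h
    set A := univ.filter fun g : G => RS.σ g ≤ S with hA
    have hmemA : ∀ g : G, g ∈ A ↔ RS.σ g ≤ S := by intro g; simp [hA]
    rw [← Finset.sum_filter, ← hA]
    have htrans : (∑ g ∈ A, ((χ (h₀ + g) : ℂˣ) : ℂ)) = ∑ g ∈ A, ((χ g : ℂˣ) : ℂ) := by
      refine Finset.sum_nbij' (fun g => h₀ + g) (fun g => -h₀ + g) ?_ ?_ ?_ ?_ ?_
      · intro a ha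
        rw [hmemA] at ha ⊢
        exact le_trans (RS.supp_add h₀ a) (sup_le hh ha)
      · intro a ha
        rw [hmemA] at ha ⊢
        refine le_trans (RS.supp_add (-h₀) a) (sup_le ?_ ha)
        rw [RS.supp_neg h₀]
        exact hh
      · intro a _; simp
      · intro a _; simp
      · intro a _; rfl
    have hfactor : (∑ g ∈ A, ((χ (h₀ + g) : ℂˣ) : ℂ))
        = ((χ h₀ : ℂˣ) : ℂ) * ∑ g ∈ A, ((χ g : ℂˣ) : ℂ) := by
      rw [Finset.mul_sum]
      refine Finset.sum_congr rfl fun g _ => ?_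
      rw [AddChar.map_add_eq_mul, Units.val_mul]
    have hne' : ((χ h₀ : ℂˣ) : ℂ) ≠ 1 := by
      intro hc
      exact hne (Units.ext (by rw [hc, Units.val_one]))
    have := htrans.symm.trans hfactor
    have hzero : (((χ h₀ : ℂˣ) : ℂ) - 1) * ∑ g ∈ A, ((χ g : ℂˣ) : ℂ) = 0 := by
      rw [sub_mul, one_mul, ← this, sub_self]
    rcases mul_eq_zero.1 hzero with hc | hc
    · exact absurd (by linear_combination hc) hne'
    · exact hc

end Aux2

section Aux3
variable {L : Type*} [Lattice L] [BoundedOrder L] [Fintype L]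
variable {G : Type*} [AddCommGroup G] [Fintype G] {RL : RegularLattice L}

lemma mu_colC (RL : RegularLattice L) (V S : L) :
    (∑ U : L, if V ≤ U ∧ U ≤ S then (RL.mu U S : ℂ) else 0)
      = if V = S then 1 else 0 := by
  have h1 : (∑ U : L, if V ≤ U ∧ U ≤ S then (RL.mu U S : ℂ) else 0)
      = ((∑ U : L, if V ≤ U ∧ U ≤ S then RL.mu U S else 0 : ℤ) : ℂ) := by
    rw [Int.cast_sum]
    exact Finset.sum_congr rfl fun U _ => by
      rw [apply_ite (fun z : ℤ => (z : ℂ)), Int.cast_zero]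
  rw [h1, mu_col_int RL V S, apply_ite (fun z : ℤ => (z : ℂ)), Int.cast_zero, Int.cast_one]

lemma key_formula (RS : RegularSupport L G RL) (χ : AddChar G ℂˣ) (j : ℕ) :
    ∑ g : G, (if RL.ρ (RS.σ g) = j then ((χ g : ℂˣ) : ℂ) else 0)
      = ∑ s ∈ Finset.range (RL.r + 1),
          (RS.γ s : ℂ) * (RL.muN s j : ℂ)
            * (RL.muLE s (RL.ρ (RS.dualSupp χ)) : ℂ) * (RL.muGE j s : ℂ) := by
  set T := RS.dualSupp χ with hT
  -- Step 1 : group the g's by their support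
  have step1 : ∑ g : G, (if RL.ρ (RS.σ g) = j then ((χ g : ℂˣ) : ℂ) else 0)
      = ∑ S : L, ∑ g : G, if RL.ρ S = j ∧ RS.σ g = S then ((χ g : ℂˣ) : ℂ) else 0 := by
    rw [Finset.sum_comm]
    refine Finset.sum_congr rfl fun g _ => ?_
    rw [Finset.sum_eq_single_of_mem (RS.σ g) (Finset.mem_univ _)]
    · by_cases hj : RL.ρ (RS.σ g) = j
      · rw [if_pos hj, if_pos ⟨hj, rfl⟩]
      · rw [if_neg hj, if_neg (by tauto)]
    · intro S _ hne
      rw [if_neg]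
      rintro ⟨-, h2⟩
      exact hne h2.symm
  -- Step 2 : Möbius inversion
  have step2 : ∀ S : L, (∑ g : G, if RS.σ g = S then ((χ g : ℂˣ) : ℂ) else 0)
      = ∑ U : L, if U ≤ S ∧ U ≤ T then (RL.mu U S : ℂ) * (RS.γ (RL.ρ U) : ℂ) else 0 := by
    intro S
    have c1 : (∑ U : L, if U ≤ S ∧ U ≤ T then (RL.mu U S : ℂ) * (RS.γ (RL.ρ U) : ℂ) else 0)
        = ∑ U : L, if U ≤ S then (RL.mu U S : ℂ)
            * (∑ g : G, if RS.σ g ≤ U then ((χ g : ℂˣ) : ℂ) else 0) else 0 := by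
      refine Finset.sum_congr rfl fun U _ => ?_
      rw [char_sum RS χ U, ← hT]
      by_cases h1 : U ≤ S <;> by_cases h2 : U ≤ T <;> simp [h1, h2]
    have c2 : (∑ U : L, if U ≤ S then (RL.mu U S : ℂ)
            * (∑ g : G, if RS.σ g ≤ U then ((χ g : ℂˣ) : ℂ) else 0) else 0)
        = ∑ U : L, ∑ g : G,
            if RS.σ g ≤ U ∧ U ≤ S then (RL.mu U S : ℂ) * ((χ g : ℂˣ) : ℂ) else 0 := by
      refine Finset.sum_congr rfl fun U _ => ?_
      by_cases hUS : U ≤ S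
      · rw [if_pos hUS, Finset.mul_sum]
        refine Finset.sum_congr rfl fun g _ => ?_
        by_cases hg : RS.σ g ≤ U
        · rw [if_pos hg, if_pos ⟨hg, hUS⟩]
        · rw [if_neg hg, if_neg (by tauto), mul_zero]
      · rw [if_neg hUS, eq_comm]
        exact Finset.sum_eq_zero fun g _ => if_neg (by tauto)
    have c3 : (∑ U : L, ∑ g : G,
            if RS.σ g ≤ U ∧ U ≤ S then (RL.mu U S : ℂ) * ((χ g : ℂˣ) : ℂ) else 0)
        = ∑ g : G, if RS.σ g = S then ((χ g : ℂˣ) : ℂ) else 0 := by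
      rw [Finset.sum_comm]
      refine Finset.sum_congr rfl fun g _ => ?_
      have hfac : (∑ U : L,
            if RS.σ g ≤ U ∧ U ≤ S then (RL.mu U S : ℂ) * ((χ g : ℂˣ) : ℂ) else 0)
          = (∑ U : L, if RS.σ g ≤ U ∧ U ≤ S then (RL.mu U S : ℂ) else 0)
              * ((χ g : ℂˣ) : ℂ) := by
        rw [Finset.sum_mul]
        refine Finset.sum_congr rfl fun U _ => ?_
        by_cases hc : RS.σ g ≤ U ∧ U ≤ S <;> simp [hc]
      rw [hfac, mu_colC RL (RS.σ g) S]
      by_cases h : RS.σ g = S <;> simp [h]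
    rw [← c3, ← c2, ← c1]
  -- Step 3 : substitute the inversion into step1
  have step3 : ∀ S : L, (∑ g : G, if RL.ρ S = j ∧ RS.σ g = S then ((χ g : ℂˣ) : ℂ) else 0)
      = ∑ U : L, if RL.ρ S = j ∧ U ≤ S ∧ U ≤ T
          then (RL.mu U S : ℂ) * (RS.γ (RL.ρ U) : ℂ) else 0 := by
    intro S
    by_cases hj : RL.ρ S = j
    · simp only [hj, eq_self_iff_true, true_and]
      exact step2 S
    · rw [Finset.sum_eq_zero fun g _ => if_neg (by tauto), eq_comm]
      exact Finset.sum_eq_zero fun U _ => if_neg (by tauto)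
  -- Step 4 : sum over S for a fixed U
  have step4 : ∀ U : L, (∑ S : L, if RL.ρ S = j ∧ U ≤ S ∧ U ≤ T
          then (RL.mu U S : ℂ) * (RS.γ (RL.ρ U) : ℂ) else 0)
      = if U ≤ T then (RS.γ (RL.ρ U) : ℂ) * (RL.muN (RL.ρ U) j : ℂ)
          * (RL.muGE j (RL.ρ U) : ℂ) else 0 := by
    intro U
    by_cases hUT : U ≤ T
    · rw [if_pos hUT]
      have e1 : ∀ S : L, (if RL.ρ S = j ∧ U ≤ S ∧ U ≤ T
            then (RL.mu U S : ℂ) * (RS.γ (RL.ρ U) : ℂ) else 0)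
          = if RL.ρ S = j ∧ U ≤ S
              then (RL.muN (RL.ρ U) j : ℂ) * (RS.γ (RL.ρ U) : ℂ) else 0 := by
        intro S
        by_cases hc : RL.ρ S = j ∧ U ≤ S
        · rw [if_pos ⟨hc.1, hc.2, hUT⟩, if_pos hc, RL.mu_eq U S hc.2, hc.1]
        · rw [if_neg (by tauto), if_neg hc]
      rw [Finset.sum_congr rfl fun S _ => e1 S, ← Finset.sum_filter, Finset.sum_const]
      have hcard : (univ.filter fun S : L => RL.ρ S = j ∧ U ≤ S).card
          = RL.muGE j (RL.ρ U) := by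
        rw [← RL.card_ge j U, Nat.card_eq_fintype_card, Fintype.card_subtype]
      rw [hcard, nsmul_eq_mul]
      ring
    · rw [if_neg hUT]
      exact Finset.sum_eq_zero fun S _ => if_neg (by tauto)
  -- Step 5 : group the U's by rank
  rw [step1, Finset.sum_congr rfl fun S _ => step3 S, Finset.sum_comm,
    Finset.sum_congr rfl fun U _ => step4 U]
  have hmaps : ∀ U : L, U ∈ (univ : Finset L) → RL.ρ U ∈ Finset.range (RL.r + 1) := by
    intro U _
    rw [Finset.mem_range]
    exact Nat.lt_succ_of_le (rho_le_r RL U)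
  rw [← Finset.sum_fiberwise_of_maps_to hmaps fun U =>
    if U ≤ T then (RS.γ (RL.ρ U) : ℂ) * (RL.muN (RL.ρ U) j : ℂ)
      * (RL.muGE j (RL.ρ U) : ℂ) else 0]
  refine Finset.sum_congr rfl fun s _ => ?_
  have e2 : ∀ U ∈ univ.filter fun U : L => RL.ρ U = s,
      (if U ≤ T then (RS.γ (RL.ρ U) : ℂ) * (RL.muN (RL.ρ U) j : ℂ)
        * (RL.muGE j (RL.ρ U) : ℂ) else 0)
      = if U ≤ T then (RS.γ s : ℂ) * (RL.muN s j : ℂ) * (RL.muGE j s : ℂ) else 0 := by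
    intro U hU
    rw [(Finset.mem_filter.1 hU).2]
  rw [Finset.sum_congr rfl e2, ← Finset.sum_filter, Finset.filter_filter, Finset.sum_const]
  have hcard : (univ.filter fun U : L => RL.ρ U = s ∧ U ≤ T).card = RL.muLE s (RL.ρ T) := by
    rw [← RL.card_le s T, Nat.card_eq_fintype_card, Fintype.card_subtype]
  rw [hcard, nsmul_eq_mul]
  ring

end Aux3

/-- For every character `χ` and every `0 ≤ j ≤ r`,
`Σ_{g : ω_σ(g) = j} χ(g) = Σ_{s=0}^r γ_σ(s) μ_L(s,j) μ_≤(s, r − ω_{σ*}(χ)) μ_≥(j,s)`.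
Consequently the pair `(ω_{σ*}, ω_σ)` is compatible (the first conjunct) with these
sums as Krawtchouk coefficients `K(ω_{σ*}, ω_σ)(i, j)` for `i = ω_{σ*}(χ)`.
Here `ω_σ(g) = ρ(σ(g))` and `ω_{σ*}(χ) = r − ρ(σ*(χ))`. -/
theorem stmt_8 {L : Type*} [Lattice L] [BoundedOrder L] [Fintype L]
    {G : Type*} [AddCommGroup G] [Fintype G] {RL : RegularLattice L}
    (RS : RegularSupport L G RL) :
    (∀ χ₁ χ₂ : AddChar G ℂˣ,
      RL.r - RL.ρ (RS.dualSupp χ₁) = RL.r - RL.ρ (RS.dualSupp χ₂) →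
      ∀ j : ℕ,
        ∑ g : G, (if RL.ρ (RS.σ g) = j then ((χ₁ g : ℂˣ) : ℂ) else 0)
          = ∑ g : G, (if RL.ρ (RS.σ g) = j then ((χ₂ g : ℂˣ) : ℂ) else 0)) ∧
    (∀ χ : AddChar G ℂˣ, ∀ j : ℕ, j ≤ RL.r →
      ∑ g : G, (if RL.ρ (RS.σ g) = j then ((χ g : ℂˣ) : ℂ) else 0)
        = ∑ s ∈ Finset.range (RL.r + 1),
            (RS.γ s : ℂ) * (RL.muN s j : ℂ)
              * (RL.muLE s (RL.r - (RL.r - RL.ρ (RS.dualSupp χ))) : ℂ)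
              * (RL.muGE j s : ℂ)) := by
  constructor
  · intro χ₁ χ₂ heq j
    rw [key_formula RS χ₁ j, key_formula RS χ₂ j]
    have h1 := rho_le_r RL (RS.dualSupp χ₁)
    have h2 := rho_le_r RL (RS.dualSupp χ₂)
    have h3 : RL.ρ (RS.dualSupp χ₁) = RL.ρ (RS.dualSupp χ₂) := by omega
    rw [h3]
  · intro χ j _
    rw [key_formula RS χ j, Nat.sub_sub_self (rho_le_r RL (RS.dualSupp χ))]
end

section
/- Let σ : G ⇢ L be a regular support, r = rk(L), and let C ⊆ G be a code. For every S ∈ L with ρ(S) = s one has |C_σ(S)| = |C| · |C*_{σ*}(S)| / γ_{σ*}(r − s), where C_σ(S) = G_σ(S) ∩ C and C*_{σ*}(S) = Ĝ_{σ*}(S) ∩ C*. -/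
open Finset
open scoped Classical Pointwise

section Aux

variable {G : Type*} [AddCommGroup G]

/-- Equivalence between `ℂˣ`-valued and `ℂ`-valued additive characters. -/
noncomputable def unitsCharEquiv : AddChar G ℂˣ ≃ AddChar G ℂ where
  toFun χ := (Units.coeHom ℂ).compAddChar χ
  invFun ψ :=
    { toFun := fun g => Units.mkOfMulEqOne (ψ g) (ψ (-g))
        (by rw [← AddChar.map_add_eq_mul]; simp)
      map_zero_eq_one' := Units.ext (by simp)
      map_add_eq_mul' := fun a b => Units.ext (by simp [AddChar.map_add_eq_mul]) }
  left_inv χ := AddChar.ext _ _ fun g => Units.ext rfl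
  right_inv ψ := AddChar.ext _ _ fun g => rfl

lemma unitsCharEquiv_apply_eq_one_iff (χ : AddChar G ℂˣ) (g : G) :
    unitsCharEquiv χ g = 1 ↔ χ g = 1 := by
  show ((χ g : ℂˣ) : ℂ) = 1 ↔ _
  exact Units.val_eq_one

/-- Characters trivial on a subgroup correspond to characters of the quotient. -/
noncomputable def annEquiv (K : AddSubgroup G) :
    {ψ : AddChar G ℂ // ∀ g ∈ K, ψ g = 1} ≃ AddChar (G ⧸ K) ℂ where
  toFun ψ := AddChar.toAddMonoidHomEquiv.symm
    (QuotientAddGroup.lift K ψ.1.toAddMonoidHom (fun g hg => by simp [ψ.2 g hg]))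
  invFun χ := ⟨χ.compAddMonoidHom (QuotientAddGroup.mk' K), fun g hg => by
    simp [(QuotientAddGroup.eq_zero_iff g).mpr hg]⟩
  left_inv ψ := by
    ext g
    simp
  right_inv χ := by
    ext g
    induction g using QuotientAddGroup.induction_on
    simp

lemma ann_card [Fintype G] (K : AddSubgroup G) :
    Nat.card {ψ : AddChar G ℂ // ∀ g ∈ K, ψ g = 1} = K.index := by
  rw [Nat.card_congr (annEquiv K), AddSubgroup.index]
  rw [Nat.card_eq_fintype_card, Nat.card_eq_fintype_card, AddChar.card_eq]

lemma ann_card_units [Fintype G] (K : AddSubgroup G) :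
    Nat.card {χ : AddChar G ℂˣ // ∀ g ∈ K, χ g = 1} = K.index := by
  have e : {χ : AddChar G ℂˣ // ∀ g ∈ K, χ g = 1} ≃ {ψ : AddChar G ℂ // ∀ g ∈ K, ψ g = 1} :=
    Equiv.subtypeEquiv unitsCharEquiv
      (fun χ => forall₂_congr fun g _ => (unitsCharEquiv_apply_eq_one_iff χ g).symm)
  rw [Nat.card_congr e]
  exact ann_card K

end Aux

/-- For every `S ∈ L` of rank `s = ρ(S)` one has
`|C_σ(S)| = |C| · |C*_{σ*}(S)| / γ_{σ*}(r − s)`, where `C_σ(S) = G_σ(S) ∩ C`,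
`C*_{σ*}(S) = Ĝ_{σ*}(S) ∩ C*` and `γ_{σ*}(r − s) = |Ĝ_{σ*}(S)|`. -/
theorem stmt_12 {L : Type*} [Lattice L] [BoundedOrder L] [Fintype L]
    {G : Type*} [AddCommGroup G] [Fintype G] {RL : RegularLattice L}
    (RS : RegularSupport L G RL) (C : AddSubgroup G) (S : L) :
    (Nat.card {g : G // g ∈ C ∧ RS.σ g ≤ S} : ℚ)
      = (Nat.card C : ℚ)
          * (Nat.card {χ : AddChar G ℂˣ //
              (∀ g ∈ C, χ g = 1) ∧ S ≤ RS.dualSupp χ} : ℚ)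
          / (Nat.card {χ : AddChar G ℂˣ // S ≤ RS.dualSupp χ} : ℚ) := by
  classical
  set H : AddSubgroup G :=
    { carrier := {g : G | RS.σ g ≤ S}
      zero_mem' := by
        have : RS.σ (0 : G) = ⊥ := (RS.supp_zero 0).mpr rfl
        simp [Set.mem_setOf_eq, this]
      add_mem' := fun {a b} ha hb =>
        (RS.supp_add a b).trans (sup_le ha hb)
      neg_mem' := fun {a} ha => by
        simpa [RS.supp_neg a] using ha } with hH
  have hmem : ∀ g : G, g ∈ H ↔ RS.σ g ≤ S := fun g => Iff.rfl
  -- rewrite the three cardinalities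
  have h1 : Nat.card {g : G // g ∈ C ∧ RS.σ g ≤ S} = Nat.card (H ⊓ C : AddSubgroup G) :=
    Nat.card_congr (Equiv.subtypeEquivRight fun g => by
      simp [AddSubgroup.mem_inf, hmem, and_comm])
  have h2 : Nat.card {χ : AddChar G ℂˣ // S ≤ RS.dualSupp χ} = H.index := by
    have e2iff : ∀ χ : AddChar G ℂˣ, (S ≤ RS.dualSupp χ) ↔ (∀ g ∈ H, χ g = 1) :=
      fun χ => (le_dualSupp_iff RS χ S).trans
        ⟨fun h g hg => h g ((hmem g).mp hg), fun h g hg => h g ((hmem g).mpr hg)⟩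
    rw [Nat.card_congr (Equiv.subtypeEquivRight e2iff)]
    exact ann_card_units H
  have h3 : Nat.card {χ : AddChar G ℂˣ //
      (∀ g ∈ C, χ g = 1) ∧ S ≤ RS.dualSupp χ} = (C ⊔ H).index := by
    rw [Nat.card_congr (Equiv.subtypeEquivRight (fun χ => ?_))]
    · exact ann_card_units (C ⊔ H)
    constructor
    · rintro ⟨hC, hS⟩ g hg
      obtain ⟨c, hc, h', hh, rfl⟩ := (AddSubgroup.mem_sup).mp hg
      rw [AddChar.map_add_eq_mul, hC c hc,
        (le_dualSupp_iff RS χ S).mp hS h' ((hmem h').mp hh), one_mul]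
    · intro h
      refine ⟨fun g hg => h g (AddSubgroup.mem_sup_left hg), ?_⟩
      exact (le_dualSupp_iff RS χ S).mpr fun g hg =>
        h g (AddSubgroup.mem_sup_right ((hmem g).mpr hg))
  rw [h1, h2, h3]
  have hHne : ((H.index : ℚ)) ≠ 0 :=
    Nat.cast_ne_zero.mpr (AddSubgroup.index_ne_zero_of_finite)
  rw [eq_div_iff hHne]
  have key : Nat.card (H ⊓ C : AddSubgroup G) * H.index
      = Nat.card C * (C ⊔ H).index := by
    have e1 : H.relIndex (C ⊔ H) * (C ⊔ H).index = H.index :=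
      AddSubgroup.relIndex_mul_index le_sup_right
    have e2 : H.relIndex (C ⊔ H) = H.relIndex C :=
      AddSubgroup.relIndex_sup_right C H
    have e3 : (H ⊓ C).relIndex C = H.relIndex C :=
      AddSubgroup.inf_relIndex_right H C
    have e5 : Nat.card ((H ⊓ C).addSubgroupOf C) = Nat.card (H ⊓ C : AddSubgroup G) :=
      Nat.card_congr (AddSubgroup.addSubgroupOfEquivOfLe inf_le_right).toEquiv
    have e4 : Nat.card ((H ⊓ C).addSubgroupOf C) * ((H ⊓ C).addSubgroupOf C).index
        = Nat.card C := AddSubgroup.card_mul_index _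
    calc Nat.card (H ⊓ C : AddSubgroup G) * H.index
        = Nat.card (H ⊓ C : AddSubgroup G) * (H.relIndex (C ⊔ H) * (C ⊔ H).index) := by
          rw [e1]
      _ = (Nat.card ((H ⊓ C).addSubgroupOf C) * ((H ⊓ C).addSubgroupOf C).index)
            * (C ⊔ H).index := by
          rw [e5, e2, ← e3]
          show _ = _ * (H ⊓ C).relIndex C * _
          ring
      _ = Nat.card C * (C ⊔ H).index := by rw [e4]
  exact_mod_cast key
end
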